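/- Hyperstability of the m-dimensional quadratic equation in Banach spaces: Let X be a vector space over K, E ⊆ X nonempty, symmetric about 0, closed under +, −, and scalar multiplication, Y a Banach space, and m ≥ 2. Let φ: E^m → [0,∞) satisfy lim_{n→∞} φ(x, nx, …, nx) = 0 and lim_{n→∞} φ(nx₁, …, nx_m) = 0. If f: E → Y satisfies ‖ f(∑_{i=1}^m x_i) + ∑_{1≤i<j≤m} f(x_i − x_j) − m∑_{i=1}^m f(x_i) ‖ ≤ φ(x₁,…,x_m) for all x₁,…,x_m ∈ E, then f(∑ x_i) + ∑_{i<j} f(x_i − x_j) = m∑ f(x_i) for all x₁,…,x_m ∈ E. -/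

import Mathlib

open Filter Topology

set_option maxHeartbeats 1000000 in
theorem mdim_quadratic_hyperstability_banach
    {K : Type*} [Field K] {X : Type*} [AddCommGroup X] [Module K X]
    {Y : Type*} [NormedAddCommGroup Y] [NormedSpace ℝ Y] [CompleteSpace Y]
    (E : Set X) (hEne : E.Nonempty)
    (hEneg : ∀ x ∈ E, -x ∈ E)
    (hEadd : ∀ x ∈ E, ∀ y ∈ E, x + y ∈ E)
    (hEsub : ∀ x ∈ E, ∀ y ∈ E, x - y ∈ E)
    (hEsmul : ∀ (k : K), ∀ x ∈ E, k • x ∈ E)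
    (m : ℕ) (hm : 2 ≤ m)
    (φ : (Fin m → X) → ℝ) (hφnonneg : ∀ x, 0 ≤ φ x)
    (hφ1 : ∀ x ∈ E,
      Tendsto (fun n : ℕ => φ (fun i => if i = ⟨0, by omega⟩ then x else n • x))
        atTop (𝓝 0))
    (hφ2 : ∀ x : Fin m → X, (∀ i, x i ∈ E) →
      Tendsto (fun n : ℕ => φ (fun i => n • x i)) atTop (𝓝 0))
    (f : X → Y)
    (hf : ∀ x : Fin m → X, (∀ i, x i ∈ E) →
      ‖f (∑ i, x i)
          + ∑ q ∈ Finset.univ.filter (fun q : Fin m × Fin m => q.1 < q.2),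
              f (x q.1 - x q.2)
          - m • ∑ i, f (x i)‖ ≤ φ x) :
    ∀ x : Fin m → X, (∀ i, x i ∈ E) →
      f (∑ i, x i)
        + ∑ q ∈ Finset.univ.filter (fun q : Fin m × Fin m => q.1 < q.2),
            f (x q.1 - x q.2)
        = m • ∑ i, f (x i) := by
  have hE0 : (0:X) ∈ E := by
    obtain ⟨e, he⟩ := hEne
    simpa using hEsmul 0 e he
  have hEnsmul : ∀ (n : ℕ), ∀ z ∈ E, n • z ∈ E := by
    intro n
    induction n with
    | zero => intro z hz; simpa using hE0
    | succ k ih => intro z hz; rw [succ_nsmul]; exact hEadd _ (ih z hz) _ hz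
  have hEsumF : ∀ (v : Fin m → X), (∀ i, v i ∈ E) → (∑ i, v i) ∈ E := by
    intro v hv
    exact Finset.sum_induction v (· ∈ E) (fun a b ha hb => hEadd a ha b hb) hE0 (fun i _ => hv i)
  set S : Finset (Fin m × Fin m) := Finset.univ.filter (fun q : Fin m × Fin m => q.1 < q.2)
    with hSdef
  -- φ vanishes at the zero tuple
  have hφ0 : φ (fun _ => (0:X)) = 0 := by
    have h := hφ2 (fun _ => 0) (fun i => hE0)
    simp only [smul_zero] at h
    exact tendsto_nhds_unique tendsto_const_nhds h
  -- card bound for S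
  have hcard : S.card + m ≤ m * m := by
    have hdisj : Disjoint S (Finset.univ : Finset (Fin m)).diag := by
      rw [Finset.disjoint_left]
      intro q hq hq'
      rw [hSdef, Finset.mem_filter] at hq
      rw [Finset.mem_diag] at hq'
      exact absurd hq'.2 (ne_of_lt hq.2)
    have h1 : (S ∪ (Finset.univ : Finset (Fin m)).diag).card = S.card + m := by
      rw [Finset.card_union_of_disjoint hdisj, Finset.diag_card, Finset.card_univ,
        Fintype.card_fin]
    have h2 : (S ∪ (Finset.univ : Finset (Fin m)).diag).card ≤ m * m := by
      have := Finset.card_le_card (Finset.subset_univ (S ∪ (Finset.univ : Finset (Fin m)).diag))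
      simpa [Fintype.card_prod] using this
    omega
  -- f 0 = 0
  have hf0 : f 0 = 0 := by
    have h := hf (fun _ => 0) (fun i => hE0)
    rw [hφ0] at h
    simp only [Finset.sum_const_zero, sub_zero, Finset.sum_const, Finset.card_univ,
      Fintype.card_fin, smul_smul, norm_le_zero_iff] at h
    -- h : f 0 + S.card • f 0 - (m * m) • f 0 = 0
    have h2 : ((1:ℝ) + S.card - (m*m)) • f 0 = 0 := by
      rw [← Nat.cast_smul_eq_nsmul ℝ S.card, ← Nat.cast_smul_eq_nsmul ℝ (m*m)] at h
      rw [sub_smul, add_smul, one_smul]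
      push_cast at h ⊢
      exact h
    have hne : ((1:ℝ) + S.card - (m*m)) ≠ 0 := by
      have : (S.card : ℝ) + m ≤ (m:ℝ) * m := by exact_mod_cast hcard
      have hm' : (2:ℝ) ≤ (m:ℝ) := by exact_mod_cast hm
      intro hcontra
      nlinarith
    rcases smul_eq_zero.mp h2 with h3 | h3
    · exact absurd h3 hne
    · exact h3
  -- key inequality : doubling by factor m
  have hkey : ∀ z ∈ E, ‖f (m • z) - (m*m) • f z‖ ≤ φ (fun _ => z) := by
    intro z hz
    have h := hf (fun _ => z) (fun i => hz)
    simpa only [Finset.sum_const, Finset.card_univ, Fintype.card_fin, sub_self, hf0,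
      smul_zero, add_zero, smul_smul] using h
  have hψ : ∀ z ∈ E, Tendsto (fun k : ℕ => φ (fun _ => k • z)) atTop (𝓝 0) := by
    intro z hz
    exact hφ2 (fun _ => z) (fun i => hz)
  -- the approximating sequence
  obtain ⟨g, hgdef⟩ : ∃ g : ℕ → X → Y, ∀ j w, g j w = ((m:ℝ)^(2*j))⁻¹ • f ((m^j : ℕ) • w) :=
    ⟨_, fun _ _ => rfl⟩
  have hg0 : ∀ w, g 0 w = f w := by
    intro w
    rw [hgdef]
    simp
  have hmR : (2:ℝ) ≤ (m:ℝ) := by exact_mod_cast hm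
  have hgdiff : ∀ (j:ℕ), ∀ w ∈ E,
      ‖g (j+1) w - g j w‖ ≤ ((m:ℝ)^(2*(j+1)))⁻¹ * φ (fun _ => (m^j : ℕ) • w) := by
    intro j w hw
    have hsm : (m^(j+1) : ℕ) • w = m • ((m^j : ℕ) • w) := by
      rw [smul_smul, pow_succ, mul_comm]
    have h2 : g (j+1) w - g j w
        = ((m:ℝ)^(2*(j+1)))⁻¹ • (f (m • ((m^j : ℕ) • w)) - (m*m) • f ((m^j : ℕ) • w)) := by
      rw [hgdef, hgdef]
      rw [smul_sub, hsm]
      congr 1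
      rw [← Nat.cast_smul_eq_nsmul ℝ (m*m), smul_smul]
      congr 1
      have hmne : (m:ℝ) ≠ 0 := by positivity
      field_simp
      push_cast
      ring
    rw [h2, norm_smul, Real.norm_eq_abs, abs_of_nonneg (by positivity)]
    exact mul_le_mul_of_nonneg_left (hkey _ (hEnsmul _ _ hw)) (by positivity)
  have hgeom : ∀ j:ℕ, ((m:ℝ)^(2*(j+1)))⁻¹ ≤ (1/4:ℝ)^(j+1) := by
    intro j
    have h4 : (4:ℝ)^(j+1) ≤ (m:ℝ)^(2*(j+1)) := by
      rw [pow_mul]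
      apply pow_le_pow_left₀ (by norm_num)
      nlinarith
    calc ((m:ℝ)^(2*(j+1)))⁻¹ ≤ ((4:ℝ)^(j+1))⁻¹ := by
          apply inv_anti₀ (by positivity) h4
      _ = (1/4:ℝ)^(j+1) := by rw [one_div, inv_pow]
  have hψj : ∀ w ∈ E, Tendsto (fun j : ℕ => φ (fun _ => (m^j : ℕ) • w)) atTop (𝓝 0) := by
    intro w hw
    exact (hψ w hw).comp (tendsto_pow_atTop_atTop_of_one_lt (by omega))
  have hcauchy : ∀ w ∈ E, CauchySeq (fun j => g j w) := by
    intro w hw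
    obtain ⟨M, hM⟩ := (hψj w hw).bddAbove_range
    have hM' : ∀ j, φ (fun _ => (m^j : ℕ) • w) ≤ M := fun j => hM (Set.mem_range_self j)
    have hM0 : 0 ≤ M := le_trans (hφnonneg _) (hM' 0)
    apply cauchySeq_of_le_geometric (1/4:ℝ) M (by norm_num)
    intro n
    rw [dist_eq_norm, norm_sub_rev]
    calc ‖g (n+1) w - g n w‖ ≤ ((m:ℝ)^(2*(n+1)))⁻¹ * φ (fun _ => (m^n : ℕ) • w) :=
          hgdiff n w hw
      _ ≤ (1/4:ℝ)^(n+1) * M := by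
          apply mul_le_mul (hgeom n) (hM' n) (hφnonneg _) (by positivity)
      _ ≤ M * (1/4:ℝ)^n := by
          rw [pow_succ]
          nlinarith [pow_nonneg (by norm_num : (0:ℝ) ≤ 1/4) n]
  obtain ⟨Q, hQ⟩ : ∃ Q : X → Y, ∀ w ∈ E, Tendsto (fun j => g j w) atTop (𝓝 (Q w)) :=
    ⟨fun w => limUnder atTop (fun j => g j w), fun w hw => (hcauchy w hw).tendsto_limUnder⟩
  have hQ0 : Q 0 = 0 := by
    have h1 : ∀ j, g j (0:X) = 0 := by
      intro j
      rw [hgdef]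
      simp [hf0]
    have h2 := hQ 0 hE0
    simp only [h1] at h2
    exact (tendsto_nhds_unique tendsto_const_nhds h2).symm
  -- f - Q tends to 0 along multiples
  have hh : ∀ z ∈ E, Tendsto (fun k : ℕ => f (k • z) - Q (k • z)) atTop (𝓝 0) := by
    intro z hz
    rw [NormedAddCommGroup.tendsto_nhds_zero]
    intro ε hε
    obtain ⟨N, hN⟩ := eventually_atTop.mp ((hψ z hz).eventually_lt_const hε)
    filter_upwards [eventually_ge_atTop N] with k hk
    have hkz : k • z ∈ E := hEnsmul k z hz
    have hstep : ∀ j:ℕ, ‖g j (k • z) - f (k • z)‖ ≤ ε/3 * (1 - (1/4:ℝ)^j) := by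
      intro j
      induction j with
      | zero => simp [hg0]
      | succ i ih =>
        have hd := hgdiff i (k • z) hkz
        have hφb : φ (fun _ => (m^i : ℕ) • (k • z)) < ε := by
          have he : (m^i : ℕ) • (k • z) = (m^i * k) • z := smul_smul _ _ _
          rw [he]
          apply hN
          calc N ≤ k := hk
            _ ≤ m^i * k := Nat.le_mul_of_pos_left k (by positivity)
        have htri : ‖g (i+1) (k • z) - f (k • z)‖
            ≤ ‖g (i+1) (k • z) - g i (k • z)‖ + ‖g i (k • z) - f (k • z)‖ := by
          have := dist_triangle (g (i+1) (k • z)) (g i (k • z)) (f (k • z))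
          simpa [dist_eq_norm] using this
        have hb : ‖g (i+1) (k • z) - g i (k • z)‖ ≤ (1/4:ℝ)^(i+1) * ε := by
          calc ‖g (i+1) (k • z) - g i (k • z)‖
              ≤ ((m:ℝ)^(2*(i+1)))⁻¹ * φ (fun _ => (m^i : ℕ) • (k • z)) := hd
            _ ≤ (1/4:ℝ)^(i+1) * ε :=
              mul_le_mul (hgeom i) (le_of_lt hφb) (hφnonneg _) (by positivity)
        have hq : (0:ℝ) ≤ (1/4:ℝ)^i := by positivity
        calc ‖g (i+1) (k • z) - f (k • z)‖
            ≤ (1/4:ℝ)^(i+1) * ε + ε/3 * (1 - (1/4:ℝ)^i) := by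
              apply le_trans htri
              exact add_le_add hb ih
          _ ≤ ε/3 * (1 - (1/4:ℝ)^(i+1)) := by
              rw [pow_succ]
              nlinarith
    have hQk := hQ (k • z) hkz
    have hnorm : Tendsto (fun j => ‖g j (k • z) - f (k • z)‖) atTop
        (𝓝 ‖Q (k • z) - f (k • z)‖) := (hQk.sub tendsto_const_nhds).norm
    have hle : ‖Q (k • z) - f (k • z)‖ ≤ ε/3 := by
      apply le_of_tendsto' hnorm
      intro j
      calc ‖g j (k • z) - f (k • z)‖ ≤ ε/3 * (1 - (1/4:ℝ)^j) := hstep j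
        _ ≤ ε/3 := by nlinarith [pow_nonneg (by norm_num : (0:ℝ) ≤ 1/4) j]
    rw [norm_sub_rev] at hle
    linarith
  -- Q satisfies the equation exactly
  have hDQ : ∀ x : Fin m → X, (∀ i, x i ∈ E) →
      Q (∑ i, x i) + ∑ q ∈ S, Q (x q.1 - x q.2) - m • ∑ i, Q (x i) = 0 := by
    intro x hx
    have hmemj : ∀ j : ℕ, ∀ i, (m^j : ℕ) • x i ∈ E := fun j i => hEnsmul _ _ (hx i)
    have hφlim : Tendsto (fun j : ℕ => φ (fun i => (m^j : ℕ) • x i)) atTop (𝓝 0) :=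
      (hφ2 x hx).comp (tendsto_pow_atTop_atTop_of_one_lt (by omega))
    have hlim1 : Tendsto (fun j : ℕ => ((m:ℝ)^(2*j))⁻¹ •
        (f (∑ i, (m^j : ℕ) • x i)
          + ∑ q ∈ S, f ((m^j : ℕ) • x q.1 - (m^j : ℕ) • x q.2)
          - m • ∑ i, f ((m^j : ℕ) • x i))) atTop (𝓝 0) := by
      apply squeeze_zero_norm _ hφlim
      intro j
      rw [norm_smul, Real.norm_eq_abs, abs_of_nonneg (by positivity)]
      have h1 := hf (fun i => (m^j : ℕ) • x i) (hmemj j)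
      calc ((m:ℝ)^(2*j))⁻¹ * ‖f (∑ i, (m^j : ℕ) • x i)
            + ∑ q ∈ S, f ((m^j : ℕ) • x q.1 - (m^j : ℕ) • x q.2)
            - m • ∑ i, f ((m^j : ℕ) • x i)‖
          ≤ 1 * φ (fun i => (m^j : ℕ) • x i) := by
            apply mul_le_mul _ h1 (norm_nonneg _) (by norm_num)
            rw [inv_le_one_iff₀]
            right
            apply one_le_pow₀
            nlinarith
        _ = φ (fun i => (m^j : ℕ) • x i) := one_mul _
    have heq : ∀ j : ℕ, ((m:ℝ)^(2*j))⁻¹ •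
        (f (∑ i, (m^j : ℕ) • x i)
          + ∑ q ∈ S, f ((m^j : ℕ) • x q.1 - (m^j : ℕ) • x q.2)
          - m • ∑ i, f ((m^j : ℕ) • x i))
        = g j (∑ i, x i) + ∑ q ∈ S, g j (x q.1 - x q.2) - m • ∑ i, g j (x i) := by
      intro j
      rw [smul_sub, smul_add]
      congr 1
      · congr 1
        · rw [hgdef, Finset.smul_sum]
        · rw [Finset.smul_sum]
          apply Finset.sum_congr rfl
          intro q hq
          rw [hgdef, smul_sub]
      · rw [smul_comm ((m:ℝ)^(2*j))⁻¹ m, Finset.smul_sum]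
        congr 1
        apply Finset.sum_congr rfl
        intro i _
        rw [hgdef]
    have hlim2 : Tendsto (fun j : ℕ =>
        g j (∑ i, x i) + ∑ q ∈ S, g j (x q.1 - x q.2) - m • ∑ i, g j (x i)) atTop
        (𝓝 (Q (∑ i, x i) + ∑ q ∈ S, Q (x q.1 - x q.2) - m • ∑ i, Q (x i))) := by
      apply Tendsto.sub
      · apply Tendsto.add (hQ _ (hEsumF x hx))
        exact tendsto_finset_sum S (fun q _ => hQ _ (hEsub _ (hx q.1) _ (hx q.2)))
      · exact (tendsto_finset_sum Finset.univ (fun i _ => hQ _ (hx i))).const_smul m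
    have := tendsto_nhds_unique (hlim1.congr heq) hlim2
    exact this.symm
  -- f = Q on E
  have hfQ : ∀ x ∈ E, f x = Q x := by
    intro x hx
    have hi0 : (0:ℕ) < m := by omega
    set i0 : Fin m := ⟨0, hi0⟩ with hi0def
    obtain ⟨t, htdef⟩ : ∃ t : ℕ → Fin m → X, ∀ n i, t n i = if i = i0 then x else n • x :=
      ⟨_, fun _ _ => rfl⟩
    have htmem : ∀ n i, t n i ∈ E := by
      intro n i
      rw [htdef]
      split
      · exact hx
      · exact hEnsmul n x hx
    have hφ1' : Tendsto (fun n : ℕ => φ (t n)) atTop (𝓝 0) := by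
      apply (hφ1 x hx).congr
      intro n
      congr 1
      funext i
      rw [htdef]
    have hA : Tendsto (fun n => f (∑ i, t n i) + ∑ q ∈ S, f (t n q.1 - t n q.2)
        - m • ∑ i, f (t n i)) atTop (𝓝 0) :=
      squeeze_zero_norm (fun n => hf (t n) (htmem n)) hφ1'
    have hB : ∀ n, Q (∑ i, t n i) + ∑ q ∈ S, Q (t n q.1 - t n q.2)
        - m • ∑ i, Q (t n i) = 0 := fun n => hDQ (t n) (htmem n)
    have hsum_t : ∀ n : ℕ, ∑ i, t n i = ((m-1)*n + 1) • x := by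
      intro n
      have hterm : ∀ i : Fin m, t n i = (if i = i0 then x - n • x else 0) + n • x := by
        intro i
        rw [htdef]
        split
        · abel
        · abel
      rw [Finset.sum_congr rfl (fun i _ => hterm i), Finset.sum_add_distrib,
        Finset.sum_ite_eq' Finset.univ i0 (fun _ => x - n • x),
        if_pos (Finset.mem_univ i0), Finset.sum_const, Finset.card_univ, Fintype.card_fin,
        smul_smul]
      have h1 : (m * n : ℕ) • x - n • x = ((m-1)*n) • x := by
        rw [Nat.sub_mul, one_mul, sub_nsmul x (Nat.le_mul_of_pos_left n (by omega))]
        abel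
      calc x - n • x + (m * n : ℕ) • x = ((m*n : ℕ) • x - n • x) + x := by abel
        _ = ((m-1)*n) • x + x := by rw [h1]
        _ = ((m-1)*n + 1) • x := by rw [succ_nsmul]
    have hinner : Tendsto (fun n : ℕ => (m-1)*n + 1) atTop atTop := by
      apply tendsto_atTop_mono _ tendsto_id
      intro n
      calc (n:ℕ) = 1 * n := (one_mul n).symm
        _ ≤ (m-1) * n := Nat.mul_le_mul_right n (by omega)
        _ ≤ (m-1)*n + 1 := Nat.le_succ _
    have hS1 : Tendsto (fun n => f (∑ i, t n i) - Q (∑ i, t n i)) atTop (𝓝 0) := by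
      have h := (hh x hx).comp hinner
      apply h.congr
      intro n
      simp only [Function.comp_apply, hsum_t]
    have hS2 : Tendsto (fun n => ∑ q ∈ S, (f (t n q.1 - t n q.2) - Q (t n q.1 - t n q.2)))
        atTop (𝓝 0) := by
      have h : Tendsto (fun n : ℕ => ∑ q ∈ S, (f (t n q.1 - t n q.2) - Q (t n q.1 - t n q.2)))
          atTop (𝓝 (∑ q ∈ S, (0:Y))) := by
        apply tendsto_finset_sum
        intro q hq
        rw [hSdef, Finset.mem_filter] at hq
        by_cases hq1 : q.1 = i0
        · have hq2 : q.2 ≠ i0 := by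
            intro hcon
            have := hq.2
            rw [hq1, hcon] at this
            exact lt_irrefl i0 this
          have harg : ∀ n, t n q.1 - t n q.2 = x - n • x := by
            intro n
            rw [htdef, htdef, if_pos hq1, if_neg hq2]
          simp only [harg]
          have hcomp := (hh (-x) (hEneg x hx)).comp (tendsto_sub_atTop_nat 1)
          apply Tendsto.congr' _ hcomp
          filter_upwards [eventually_ge_atTop 1] with n hn
          have he : (n - 1 : ℕ) • (-x) = x - n • x := by
            obtain ⟨p, rfl⟩ : ∃ p, n = p + 1 := ⟨n - 1, by omega⟩
            rw [Nat.add_sub_cancel, succ_nsmul, smul_neg]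
            abel
          rw [Function.comp_apply, he]
        · have hq2 : q.2 ≠ i0 := by
            intro hcon
            have hlt := hq.2
            rw [hcon] at hlt
            have : q.1.val < 0 := hlt
            omega
          have harg : ∀ n, t n q.1 - t n q.2 = 0 := by
            intro n
            rw [htdef, htdef, if_neg hq1, if_neg hq2, sub_self]
          simp only [harg, hf0, hQ0, sub_zero]
          exact tendsto_const_nhds
      simpa using h
    have hS3 : Tendsto (fun n => ∑ i, (f (t n i) - Q (t n i))) atTop (𝓝 (f x - Q x)) := by
      have h : Tendsto (fun n : ℕ => ∑ i, (f (t n i) - Q (t n i))) atTop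
          (𝓝 (∑ i : Fin m, (if i = i0 then f x - Q x else 0))) := by
        apply tendsto_finset_sum
        intro i _
        by_cases hi : i = i0
        · have harg : ∀ n : ℕ, t n i = x := by
            intro n; rw [htdef, if_pos hi]
          simp only [harg, if_pos hi]
          exact tendsto_const_nhds
        · have harg : ∀ n : ℕ, t n i = n • x := by
            intro n; rw [htdef, if_neg hi]
          simp only [harg, if_neg hi]
          exact hh x hx
      have hsum : ∑ i : Fin m, (if i = i0 then f x - Q x else 0) = f x - Q x := by
        rw [Finset.sum_ite_eq' Finset.univ i0 (fun _ => f x - Q x), if_pos (Finset.mem_univ i0)]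
      rwa [hsum] at h
    have hC : Tendsto (fun n => (f (∑ i, t n i) - Q (∑ i, t n i))
        + (∑ q ∈ S, (f (t n q.1 - t n q.2) - Q (t n q.1 - t n q.2)))
        - m • (∑ i, (f (t n i) - Q (t n i)))) atTop (𝓝 (0 + 0 - m • (f x - Q x))) :=
      (hS1.add hS2).sub (hS3.const_smul m)
    have hEq : ∀ n, (f (∑ i, t n i) - Q (∑ i, t n i))
        + (∑ q ∈ S, (f (t n q.1 - t n q.2) - Q (t n q.1 - t n q.2)))
        - m • (∑ i, (f (t n i) - Q (t n i)))
        = f (∑ i, t n i) + ∑ q ∈ S, f (t n q.1 - t n q.2) - m • ∑ i, f (t n i) := by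
      intro n
      have hb := hB n
      rw [Finset.sum_sub_distrib, Finset.sum_sub_distrib, smul_sub]
      calc f (∑ i, t n i) - Q (∑ i, t n i)
            + (∑ q ∈ S, f (t n q.1 - t n q.2) - ∑ q ∈ S, Q (t n q.1 - t n q.2))
            - (m • ∑ i, f (t n i) - m • ∑ i, Q (t n i))
          = (f (∑ i, t n i) + ∑ q ∈ S, f (t n q.1 - t n q.2) - m • ∑ i, f (t n i))
            - (Q (∑ i, t n i) + ∑ q ∈ S, Q (t n q.1 - t n q.2) - m • ∑ i, Q (t n i)) := by
            abel
        _ = f (∑ i, t n i) + ∑ q ∈ S, f (t n q.1 - t n q.2) - m • ∑ i, f (t n i) := by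
            rw [hb, sub_zero]
    have huniq := tendsto_nhds_unique hA (hC.congr hEq)
    -- huniq : 0 = 0 + 0 - m • (f x - Q x)
    have h4 : m • (f x - Q x) = 0 := by
      rw [zero_add, zero_sub] at huniq
      exact (neg_eq_zero.mp huniq.symm)
    rw [← Nat.cast_smul_eq_nsmul ℝ m] at h4
    rcases smul_eq_zero.mp h4 with h5 | h5
    · exfalso
      have : (m:ℝ) ≠ 0 := by positivity
      exact this h5
    · exact sub_eq_zero.mp h5
  -- conclude
  intro x hx
  have h := hDQ x hx
  have e1 : f (∑ i, x i) = Q (∑ i, x i) := hfQ _ (hEsumF x hx)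
  have e2 : ∑ q ∈ S, f (x q.1 - x q.2) = ∑ q ∈ S, Q (x q.1 - x q.2) :=
    Finset.sum_congr rfl (fun q _ => hfQ _ (hEsub _ (hx q.1) _ (hx q.2)))
  have e3 : ∑ i, f (x i) = ∑ i, Q (x i) :=
    Finset.sum_congr rfl (fun i _ => hfQ _ (hx i))
  rw [e1, e2, e3]
  exact sub_eq_zero.mp h
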